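/- (First theorem of Ostrowski) Let |·| be an absolute value on ℚ that is not ultrametric. Then there exists a real number ρ with 0 < ρ ≤ 1 such that |x| = |x|_∞^ρ for all x ∈ ℚ, where |·|_∞ is the usual (archimedean) absolute value on ℚ. -/

import Mathlib

open Real

/-- First theorem of Ostrowski: a non-ultrametric absolute value on `ℚ` is a power
`|·|_∞ ^ ρ` of the usual archimedean absolute value, for some `0 < ρ ≤ 1`. -/
theorem ostrowski_archimedean (f : AbsoluteValue ℚ ℝ)
    (h : ¬ ∀ x y : ℚ, f (x + y) ≤ max (f x) (f y)) :
    ∃ ρ : ℝ, 0 < ρ ∧ ρ ≤ 1 ∧ ∀ x : ℚ, f x = |(x : ℝ)| ^ ρ := by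
  set F : MulRingNorm ℚ :=
    { toFun := f
      map_zero' := f.map_zero
      add_le' := f.add_le
      neg' := f.map_neg
      map_one' := f.map_one
      map_mul' := f.map_mul
      eq_zero_of_map_eq_zero' := fun x hx => f.eq_zero.mp hx } with hF
  have hFf : ∀ x : ℚ, F x = f x := fun x => rfl
  have hnontriv : F ≠ 1 := by
    intro h1
    apply h
    intro x y
    rw [← hFf, ← hFf, ← hFf, h1]
    by_cases hx : x = 0
    · by_cases hy : y = 0 <;> simp [hx, hy]
    · by_cases hxy : x + y = 0
      · simp [hxy, hx, apply_nonneg]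
      · simp [hxy, hx]
  have key : (∃ c : ℝ, 0 < c ∧ (fun x : ℚ => f x ^ c) = Rat.AbsoluteValue.real) ∨
      ∃! p, ∃ (_ : Fact p.Prime), ∃ c : ℝ, 0 < c ∧
        (fun x : ℚ => f x ^ c) = Rat.AbsoluteValue.padic p := by
    have hnt : f.IsNontrivial := by
      by_contra hc
      apply hnontriv
      unfold AbsoluteValue.IsNontrivial at hc
      push_neg at hc
      ext x
      by_cases hx : x = 0
      · simp [hx]
      · simp [hx, hFf, hc x hx]
    rcases Rat.AbsoluteValue.equiv_real_or_padic f hnt with h1 | h1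
    · exact Or.inl (AbsoluteValue.isEquiv_iff_exists_rpow_eq.mp h1)
    · right
      obtain ⟨p, ⟨hp, hq⟩, huniq⟩ := h1
      exact ⟨p, ⟨hp, AbsoluteValue.isEquiv_iff_exists_rpow_eq.mp hq⟩,
        fun q ⟨hq', hq2⟩ => huniq q ⟨hq', AbsoluteValue.isEquiv_iff_exists_rpow_eq.mpr hq2⟩⟩
  rcases key with hreal | hpadic
  · obtain ⟨c, hc, hfc⟩ := hreal
    refine ⟨1 / c, by positivity, ?_, ?_⟩
    · -- f 2 = 2 ^ (1/c) ≤ 2 forces 1/c ≤ 1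
      have h2 : f 2 ^ c = (2 : ℝ) := by
        have := congr_fun hfc 2
        simpa using this
      have hf2 : f 2 ≤ 2 := by
        calc f 2 = f (1 + 1) := by norm_num
        _ ≤ f 1 + f 1 := f.add_le 1 1
        _ = 2 := by rw [f.map_one]; norm_num
      have hf2pos : 0 < f 2 := f.pos (by norm_num)
      have he : f 2 = (2 : ℝ) ^ (1 / c) := by
        rw [← h2, one_div, Real.rpow_rpow_inv (apply_nonneg f 2) hc.ne']
      have : (2 : ℝ) ^ (1 / c) ≤ (2 : ℝ) ^ (1 : ℝ) := by
        rw [Real.rpow_one]; rw [he] at hf2; exact hf2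
      exact (Real.rpow_le_rpow_left_iff (by norm_num)).mp this
    · intro x
      have := congr_fun hfc x
      simp only [Rat.AbsoluteValue.real_eq_abs] at this
      rw [Rat.cast_abs] at this
      rw [← this, ← hFf, one_div, Real.rpow_rpow_inv (apply_nonneg F x) hc.ne']
  · exfalso
    obtain ⟨p, ⟨hp, c, hc, hfc⟩, _⟩ := hpadic
    apply h
    intro x y
    have hmax : ∀ a b : ℝ, 0 ≤ a → 0 ≤ b → max a b ^ c = max (a ^ c) (b ^ c) := by
      intro a b ha hb
      rcases le_total a b with hab | hab
      · rw [max_eq_right hab, max_eq_right (Real.rpow_le_rpow ha hab hc.le)]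
      · rw [max_eq_left hab, max_eq_left (Real.rpow_le_rpow hb hab hc.le)]
    rw [← Real.rpow_le_rpow_iff (apply_nonneg f _) (le_max_iff.mpr (Or.inl (apply_nonneg f x)))
      hc, hmax _ _ (apply_nonneg f x) (apply_nonneg f y)]
    have hx := congr_fun hfc x
    have hy := congr_fun hfc y
    have hxy := congr_fun hfc (x + y)
    simp only [← hFf] at *
    rw [hx, hy, hxy]
    simp only [Rat.AbsoluteValue.padic_eq_padicNorm]
    have := padicNorm.nonarchimedean (p := p) (q := x) (r := y)
    have hcast : ((padicNorm p (x + y) : ℚ) : ℝ) ≤ ((max (padicNorm p x) (padicNorm p y) : ℚ) : ℝ) := by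
      exact_mod_cast this
    rw [Rat.cast_max] at hcast
    exact hcast
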